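/- Let f, g ∈ ℂ[x], k ≥ 1, and let I, J ⊆ ℕ be finite sets with |I| = |J| = k. Let z = (z₁,…,z_k) ∈ R_{I,J} and define f_z(x) := f(x) − F_I(z,x) and g_z(x) := g(x) − G_J(z,x). Suppose there exists an open neighborhood U ⊆ ℂ^k of z such that for all z̃ = (z̃₁,…,z̃_k) ∈ U and all z' ∈ U and all i = 1,…,k one has |F_I(z, z̃_i)|² + |G_J(z, z̃_i)|² ≤ |F_I(z', z̃_i)|² + |G_J(z', z̃_i)|². Then for every i = 1,…,k, f_z'(z_i)·conj(f(z_i)) + g_z'(z_i)·conj(g(z_i)) = 0; in particular z is a fixed point of the simplified Gauss-Newton iteration z_i ↦ z_i − (conj(f_z'(z_i)) f(z_i) + conj(g_z'(z_i)) g(z_i)) / (|f_z'(z_i)|² + |g_z'(z_i)|²) whenever the denominators are nonzero. -/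

import Mathlib

open Matrix

noncomputable section

/-- The (square) generalized Vandermonde matrix `V_K(z)` with `(s,t)` entry `z_s ^ i_t`. -/
def vand {k : ℕ} (e : Fin k → ℕ) (z : Fin k → ℂ) : Matrix (Fin k) (Fin k) ℂ :=
  Matrix.of fun s t => z s ^ e t

/-- The generalized Lagrange polynomial `L_{K,i}(z,x) = Σ_t (V_K(z)⁻¹)_{t,i} x^{i_t}`
in the square case `|K| = k`. -/
def lag {k : ℕ} (e : Fin k → ℕ) (z : Fin k → ℂ) (i : Fin k) : Polynomial ℂ :=
  ∑ t : Fin k, Polynomial.C ((vand e z)⁻¹ t i) * Polynomial.X ^ e t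

/-- `F_K(z,·) := Σ_i f(z_i) L_{K,i}(z,·)`, the minimal-norm interpolant of `f` at `z`
with support `K`. -/
def FI {k : ℕ} (e : Fin k → ℕ) (f : Polynomial ℂ) (z : Fin k → ℂ) : Polynomial ℂ :=
  ∑ i : Fin k, Polynomial.C (f.eval (z i)) * lag e z i

open Polynomial in
lemma interp {k : ℕ} (e : Fin k → ℕ) (f : Polynomial ℂ) (z : Fin k → ℂ)
    (hz : IsUnit (vand e z).det) (j : Fin k) :
    (FI e f z).eval (z j) = f.eval (z j) := by
  have h := Matrix.mul_nonsing_inv (vand e z) hz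
  simp only [FI, lag, eval_finset_sum, eval_mul, eval_C, eval_pow, eval_X]
  have key : ∀ i, ∑ t : Fin k, (vand e z)⁻¹ t i * z j ^ e t
      = (1 : Matrix (Fin k) (Fin k) ℂ) j i := by
    intro i
    rw [← h, Matrix.mul_apply]
    simp [vand, mul_comm]
  simp only [key, Matrix.one_apply]
  simp [Finset.sum_ite_eq']

open Polynomial Complex in
lemma hasDerivAt_normSq_comp (p : Polynomial ℂ) (w v : ℂ) :
    HasDerivAt (fun s : ℝ => ‖p.eval (w + s • v)‖ ^ 2)
      (2 * (v * p.derivative.eval w * (starRingEnd ℂ) (p.eval w)).re) 0 := by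
  have hc : HasDerivAt (fun s : ℝ => w + s • v) v 0 := by
    simpa using ((hasDerivAt_id (0:ℝ)).smul_const v).const_add w
  have h00 : w = w + (0:ℝ) • v := by simp
  have hfd := ((p.hasDerivAt w).hasFDerivAt.restrictScalars ℝ)
  rw [h00] at hfd
  have hu : HasDerivAt (fun s : ℝ => p.eval (w + s • v)) (v * p.derivative.eval w) 0 := by
    have := hfd.comp_hasDerivAt (0:ℝ) hc
    simpa [smul_eq_mul, Function.comp_def] using this
  have hconj : HasDerivAt (fun s : ℝ => (starRingEnd ℂ) (p.eval (w + s • v)))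
      ((starRingEnd ℂ) (v * p.derivative.eval w)) 0 := hu.star
  have hmul := hu.mul hconj
  have hre := (Complex.reCLM.hasFDerivAt).comp_hasDerivAt (0:ℝ) hmul
  have heq : (fun s : ℝ => ‖p.eval (w + s • v)‖ ^ 2)
      = fun s : ℝ => Complex.reCLM (p.eval (w + s • v) * (starRingEnd ℂ) (p.eval (w + s • v))) := by
    funext s
    rw [Complex.reCLM_apply, Complex.mul_conj, Complex.ofReal_re,
      Complex.normSq_eq_norm_sq]
  rw [heq]
  convert hre using 1
  · rfl
  · rfl
  · rfl
  have h0 : ((0:ℝ) • v : ℂ) = 0 := by simp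
  simp only [h0, add_zero, Function.comp]
  set a := v * p.derivative.eval w
  set b := p.eval w
  have hab : a * (starRingEnd ℂ) b + b * (starRingEnd ℂ) a
      = (a * (starRingEnd ℂ) b) + (starRingEnd ℂ) (a * (starRingEnd ℂ) b) := by
    simp only [_root_.map_mul, Complex.conj_conj]; ring
  simp only [Complex.reCLM_apply, hab, Complex.add_re, Complex.conj_re]
  ring

/-- if the perturbation is locally pointwise minimal at `z`, then for each `i`,
`f_z'(z_i)·conj(f(z_i)) + g_z'(z_i)·conj(g(z_i)) = 0`; in particular `z` is a fixed point of
the simplified Gauss-Newton iteration whenever the denominators are nonzero. -/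
theorem stmt8 {k : ℕ} (hk : 1 ≤ k)
    (e : Fin k → ℕ) (he : StrictMono e) (d : Fin k → ℕ) (hd : StrictMono d)
    (f g : Polynomial ℂ) (z : Fin k → ℂ)
    (hze : IsUnit (vand e z).det) (hzd : IsUnit (vand d z).det)
    (U : Set (Fin k → ℂ)) (hU : IsOpen U) (hzU : z ∈ U)
    (hmin : ∀ zt ∈ U, ∀ z' ∈ U, ∀ i : Fin k,
      ‖(FI e f z).eval (zt i)‖ ^ 2 + ‖(FI d g z).eval (zt i)‖ ^ 2 ≤
        ‖(FI e f z').eval (zt i)‖ ^ 2 + ‖(FI d g z').eval (zt i)‖ ^ 2) :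
    ∀ i : Fin k,
      (Polynomial.derivative (f - FI e f z)).eval (z i) * (starRingEnd ℂ) (f.eval (z i))
        + (Polynomial.derivative (g - FI d g z)).eval (z i) * (starRingEnd ℂ) (g.eval (z i))
        = 0 ∧
      ((‖(Polynomial.derivative (f - FI e f z)).eval (z i)‖ ^ 2
          + ‖(Polynomial.derivative (g - FI d g z)).eval (z i)‖ ^ 2 : ℝ) ≠ 0 →
        z i -
          ((starRingEnd ℂ) ((Polynomial.derivative (f - FI e f z)).eval (z i)) * f.eval (z i)
            + (starRingEnd ℂ) ((Polynomial.derivative (g - FI d g z)).eval (z i)) * g.eval (z i))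
          / ((‖(Polynomial.derivative (f - FI e f z)).eval (z i)‖ ^ 2
              + ‖(Polynomial.derivative (g - FI d g z)).eval (z i)‖ ^ 2 : ℝ) : ℂ)
          = z i) := by
  intro i
  set F := FI e f z with hFdef
  set G := FI d g z with hGdef
  set w := z i with hwdef
  have hF : F.eval w = f.eval w := interp e f z hze i
  have hG : G.eval w = g.eval w := interp d g z hzd i
  -- the open set where everything is invertible
  have hcontv : ∀ (c : Fin k → ℕ), Continuous fun z' : Fin k → ℂ => (vand c z').det := by
    intro c
    apply Continuous.matrix_det
    exact continuous_pi fun s => continuous_pi fun t => (continuous_apply s).pow _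
  set S : Set (Fin k → ℂ) :=
    U ∩ ((fun z' => (vand e z').det) ⁻¹' {0}ᶜ ∩ (fun z' => (vand d z').det) ⁻¹' {0}ᶜ)
    with hSdef
  have hS : IsOpen S :=
    hU.inter (((isOpen_compl_singleton).preimage (hcontv e)).inter
      ((isOpen_compl_singleton).preimage (hcontv d)))
  have hzS : z ∈ S :=
    ⟨hzU, ⟨fun h => hze.ne_zero h, fun h => hzd.ne_zero h⟩⟩
  -- the local minimum
  set φ : ℂ → ℝ := fun ζ =>
    (‖f.eval ζ‖ ^ 2 + ‖g.eval ζ‖ ^ 2) - (‖F.eval ζ‖ ^ 2 + ‖G.eval ζ‖ ^ 2) with hφdef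
  have hφw : φ w = 0 := by simp [hφdef, hF, hG]
  have hupd : Continuous (fun ζ : ℂ => Function.update z i ζ) := by
    refine continuous_pi fun j => ?_
    simp only [Function.update_apply]
    by_cases hj : j = i
    · simp only [if_pos hj]; exact continuous_id
    · simp only [if_neg hj]; exact continuous_const
  have hminφ : IsLocalMin φ w := by
    have hmem : ∀ᶠ ζ in nhds w, Function.update z i ζ ∈ S := by
      have hupdz : Function.update z i w ∈ S := by
        rw [hwdef, Function.update_eq_self]; exact hzS
      exact hupd.continuousAt.eventually_mem (hS.mem_nhds hupdz)
    refine hmem.mono fun ζ hζ => ?_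
    obtain ⟨hζU, hζe, hζd⟩ := hζ
    set zt := Function.update z i ζ with hztdef
    have hzti : zt i = ζ := Function.update_self i ζ z
    have h1 := hmin zt hζU zt hζU i
    have h2 : (FI e f zt).eval (zt i) = f.eval (zt i) :=
      interp e f zt (isUnit_iff_ne_zero.mpr hζe) i
    have h3 : (FI d g zt).eval (zt i) = g.eval (zt i) :=
      interp d g zt (isUnit_iff_ne_zero.mpr hζd) i
    rw [h2, h3, hzti] at h1
    rw [hφw]
    simp only [hφdef]
    linarith
  -- directional derivatives vanish
  set a : ℂ := (Polynomial.derivative (f - F)).eval w * (starRingEnd ℂ) (f.eval w)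
      + (Polynomial.derivative (g - G)).eval w * (starRingEnd ℂ) (g.eval w) with hadef
  have key : ∀ v : ℂ, (v * a).re = 0 := by
    intro v
    have h1 := hasDerivAt_normSq_comp f w v
    have h2 := hasDerivAt_normSq_comp g w v
    have h3 := hasDerivAt_normSq_comp F w v
    have h4 := hasDerivAt_normSq_comp G w v
    have hD : HasDerivAt (fun s : ℝ => φ (w + s • v)) (2 * (v * a).re) 0 := by
      have hsum := (h1.add h2).sub (h3.add h4)
      convert hsum using 1
      · rfl
      · rfl
      · rfl
      have hva : v * a = (v * (Polynomial.derivative f).eval w * (starRingEnd ℂ) (f.eval w)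
            + v * (Polynomial.derivative g).eval w * (starRingEnd ℂ) (g.eval w))
          - (v * (Polynomial.derivative F).eval w * (starRingEnd ℂ) (F.eval w)
            + v * (Polynomial.derivative G).eval w * (starRingEnd ℂ) (G.eval w)) := by
        rw [hadef, hF, hG]
        simp only [Polynomial.derivative_sub, Polynomial.eval_sub]
        ring
      rw [hva]
      simp only [Complex.sub_re, Complex.add_re]
      ring
    have hlm : IsLocalMin (fun s : ℝ => φ (w + s • v)) 0 := by
      have hcont : Continuous (fun s : ℝ => w + s • v) :=
        continuous_const.add (continuous_id.smul continuous_const)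
      have hc : Filter.Tendsto (fun s : ℝ => w + s • v) (nhds 0) (nhds w) := by
        have h := hcont.continuousAt (x := (0:ℝ))
        rw [ContinuousAt] at h
        have h0 : w + (0:ℝ) • v = w := by simp
        rwa [h0] at h
      have hev := hc.eventually hminφ
      refine hev.mono fun s hs => ?_
      simpa using hs
    have := hlm.hasDerivAt_eq_zero hD
    linarith [this]
  have ha : a = 0 := by
    have h1 : a.re = 0 := by simpa using key 1
    have h2 : a.im = 0 := by
      have := key Complex.I
      simpa [Complex.mul_re, Complex.I_re, Complex.I_im] using this
    exact Complex.ext h1 h2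
  constructor
  · exact ha
  · intro hden
    have hca : (starRingEnd ℂ) a = 0 := by rw [ha, map_zero]
    have hnum := congrArg (starRingEnd ℂ) ha
    rw [hadef] at hnum
    simp only [map_add, _root_.map_mul, Complex.conj_conj, map_zero] at hnum
    rw [hnum, zero_div, sub_zero]
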